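/- Let V be a 4-dimensional real inner product space with orthogonal complex structure J (J² = −Id), ω(x,y) = ⟪Jx,y⟫, and orthonormal basis e₁,...,e₄ satisfying ω(eᵢ,eⱼ)² = 1/3 for all i ≠ j. Define R(X,Y)Z = ⟪X,Z⟫Y − ⟪Y,Z⟫X + ω(X,Z)JY − ω(Y,Z)JX + 2ω(X,Y)JZ. Then for any pairwise distinct i, j, k, one has ⟪R(eᵢ,eⱼ)eₖ, eᵢ⟫ = −3ω(eᵢ,eⱼ)ω(eᵢ,eₖ), and hence ⟪R(eᵢ,eⱼ)eₖ, eᵢ⟫ = ±1; in particular ⟪R(eᵢ,eⱼ)eₖ, eᵢ⟫ ≠ 0. -/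
import Mathlib


open RealInnerProductSpace

theorem stmt15 (V : Type*) [NormedAddCommGroup V] [InnerProductSpace ℝ V]
    [FiniteDimensional ℝ V] (hdim : Module.finrank ℝ V = 4)
    (J : V →ₗ[ℝ] V) (hJ2 : ∀ x, J (J x) = -x)
    (hJi : ∀ x y, ⟪J x, J y⟫ = ⟪x, y⟫)
    (ω : V → V → ℝ) (hω : ∀ x y, ω x y = ⟪J x, y⟫)
    (e : OrthonormalBasis (Fin 4) ℝ V)
    (hsq : ∀ i j : Fin 4, i ≠ j → (ω (e i) (e j)) ^ 2 = 1 / 3)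
    (R : V → V → V → V)
    (hR : ∀ X Y Z, R X Y Z = ⟪X, Z⟫ • Y - ⟪Y, Z⟫ • X + ω X Z • J Y - ω Y Z • J X
        + (2 * ω X Y) • J Z)
    (i j k : Fin 4) (hij : i ≠ j) (hjk : j ≠ k) (hik : i ≠ k) :
    ⟪R (e i) (e j) (e k), e i⟫ = -3 * ω (e i) (e j) * ω (e i) (e k) ∧
    (⟪R (e i) (e j) (e k), e i⟫ = 1 ∨ ⟪R (e i) (e j) (e k), e i⟫ = -1) ∧
    ⟪R (e i) (e j) (e k), e i⟫ ≠ 0 := by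
  have hanti : ∀ x y : V, ⟪J x, y⟫ = -⟪x, J y⟫ := by
    intro x y
    have := hJi (J x) y
    rw [hJ2] at this
    rw [← this, inner_neg_left]
  have hωanti : ∀ x y : V, ω x y = -ω y x := by
    intro x y
    rw [hω, hω, hanti, real_inner_comm]
  have hik' : ⟪e i, e k⟫ = 0 := e.orthonormal.2 hik
  have hjk' : ⟪e j, e k⟫ = 0 := e.orthonormal.2 hjk
  have hii : ⟪e i, e i⟫ = 1 := by
    rw [real_inner_self_eq_norm_sq, e.orthonormal.1 i]; norm_num
  have hJii : ⟪J (e i), e i⟫ = 0 := by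
    have := hanti (e i) (e i)
    have h2 := real_inner_comm (e i) (J (e i))
    linarith [this, h2]
  have hJji : ⟪J (e j), e i⟫ = -ω (e i) (e j) := by
    rw [hω, hanti, real_inner_comm]
  have hJki : ⟪J (e k), e i⟫ = -ω (e i) (e k) := by
    rw [hω, hanti, real_inner_comm]
  have hmain : ⟪R (e i) (e j) (e k), e i⟫ = -3 * ω (e i) (e j) * ω (e i) (e k) := by
    rw [hR]
    simp only [inner_add_left, inner_sub_left, real_inner_smul_left, hik', hjk', hii,
      hJii, hJji, hJki]
    ring
  refine ⟨hmain, ?_⟩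
  set a := ω (e i) (e j) with ha
  set b := ω (e i) (e k) with hb
  have ha2 : a ^ 2 = 1 / 3 := hsq i j hij
  have hb2 : b ^ 2 = 1 / 3 := hsq i k hik
  have hsq1 : (-3 * a * b) * (-3 * a * b) = 1 := by nlinarith
  rcases mul_self_eq_one_iff.mp hsq1 with h | h
  · exact ⟨Or.inl (hmain.trans h), by rw [hmain, h]; norm_num⟩
  · exact ⟨Or.inr (hmain.trans h), by rw [hmain, h]; norm_num⟩
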